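/- Let q be a prime power, n a positive integer, and let d₁, d₂, d₃ be positive integers with d₃ ≤ d₂ ≤ d₁ such that d₂ does not divide 6·d₁, d₃ does not divide 6·d₁ and d₃ does not divide 6·d₂. If m is a positive integer divisible by lcm(q^{d₁}−1, q^{d₂}−1, q^{d₃}−1), then m ≥ q^{(9/4)·d₃}. -/

import Mathlib

theorem zmod_pow_one_of_dvd {d q x : ℕ} (hq : 1 ≤ q ^ x) (h : d ∣ q ^ x - 1) :
    (q : ZMod d) ^ x = 1 := by
  have h0 : ((q ^ x - 1 : ℕ) : ZMod d) = 0 := (ZMod.natCast_eq_zero_iff _ _).mpr h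
  have h2 : q ^ x = (q ^ x - 1) + 1 := by omega
  calc (q : ZMod d) ^ x = ((q ^ x : ℕ) : ZMod d) := by push_cast; ring
    _ = ((q ^ x - 1 + 1 : ℕ) : ZMod d) := by rw [← h2]
    _ = 1 := by push_cast [h0]; ring

theorem dvd_pow_sub_one_of_zmod {d q x : ℕ} (hd : 0 < d) (hq : 1 ≤ q ^ x)
    (h : (q : ZMod d) ^ x = 1) : d ∣ q ^ x - 1 := by
  haveI : NeZero d := ⟨hd.ne'⟩
  rw [← ZMod.natCast_eq_zero_iff]
  have h2 : ((q ^ x - 1 + 1 : ℕ) : ZMod d) = 1 := by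
    rw [show q ^ x - 1 + 1 = q ^ x by omega]; push_cast; rw [h]
  push_cast at h2
  linear_combination h2

-- Lemma A
theorem gcd_pow_sub_one_dvd (q x y : ℕ) (hq : 2 ≤ q) :
    Nat.gcd (q ^ x - 1) (q ^ y - 1) ∣ q ^ (Nat.gcd x y) - 1 := by
  set d := Nat.gcd (q ^ x - 1) (q ^ y - 1) with hd
  have hqx : 1 ≤ q ^ x := Nat.one_le_pow _ _ (by omega)
  have hqy : 1 ≤ q ^ y := Nat.one_le_pow _ _ (by omega)
  have hqg : 1 ≤ q ^ (Nat.gcd x y) := Nat.one_le_pow _ _ (by omega)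
  rcases Nat.eq_zero_or_pos d with h0 | hdpos
  · have h1 : q ^ x - 1 = 0 := Nat.eq_zero_of_gcd_eq_zero_left (hd ▸ h0)
    have h2 : q ^ y - 1 = 0 := Nat.eq_zero_of_gcd_eq_zero_right (hd ▸ h0)
    have hx0 : x = 0 := by
      by_contra hx; have := Nat.one_lt_pow hx (show 1 < q by omega); omega
    have hy0 : y = 0 := by
      by_contra hy; have := Nat.one_lt_pow hy (show 1 < q by omega); omega
    simp [h0, hx0, hy0]
  · have hx1 : (q : ZMod d) ^ x = 1 := zmod_pow_one_of_dvd hqx (Nat.gcd_dvd_left _ _)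
    have hy1 : (q : ZMod d) ^ y = 1 := zmod_pow_one_of_dvd hqy (Nat.gcd_dvd_right _ _)
    exact dvd_pow_sub_one_of_zmod hdpos hqg (pow_gcd_eq_one.mpr ⟨hx1, hy1⟩)

theorem gcd_lcm_dvd_mul_gcd (a b c : ℕ) (ha : a ≠ 0) (hb : b ≠ 0) (hc : c ≠ 0) :
    Nat.gcd (Nat.lcm a b) c ∣ Nat.gcd a c * Nat.gcd b c := by
  have hl : Nat.lcm a b ≠ 0 := Nat.lcm_ne_zero ha hb
  have hg : Nat.gcd (Nat.lcm a b) c ≠ 0 := Nat.gcd_ne_zero_left hl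
  have hr : Nat.gcd a c * Nat.gcd b c ≠ 0 :=
    Nat.mul_ne_zero (Nat.gcd_ne_zero_left ha) (Nat.gcd_ne_zero_left hb)
  rw [← Nat.factorization_le_iff_dvd hg hr]
  intro p
  rw [Nat.factorization_gcd hl hc, Nat.factorization_lcm ha hb,
    Nat.factorization_mul (Nat.gcd_ne_zero_left ha) (Nat.gcd_ne_zero_left hb),
    Nat.factorization_gcd ha hc, Nat.factorization_gcd hb hc]
  simp only [Finsupp.inf_apply, Finsupp.sup_apply, Finsupp.add_apply]
  omega

-- Lemma C
theorem pow_mul_pred_le (q d g : ℕ) (hq : 1 ≤ q) (hg : g ≤ d) :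
    q ^ (d - g) * (q ^ g - 1) ≤ q ^ d - 1 := by
  have h1 : q ^ (d - g) * q ^ g = q ^ d := by rw [← pow_add]; congr 1; omega
  have h2 : 1 ≤ q ^ (d - g) := Nat.one_le_pow _ _ (by omega)
  have h3 : 1 ≤ q ^ g := Nat.one_le_pow _ _ (by omega)
  have := Nat.mul_le_mul_left (q ^ (d - g)) (Nat.le_refl (q ^ g))
  calc q ^ (d - g) * (q ^ g - 1) = q ^ (d - g) * q ^ g - q ^ (d - g) := by
        rw [Nat.mul_sub_one]
    _ ≤ q ^ d - 1 := by omega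

theorem quarter_bound {x y : ℕ} (hy : 0 < y) (h : ¬ y ∣ 6 * x) : 4 * Nat.gcd x y ≤ y := by
  have hgpos : 0 < Nat.gcd x y := Nat.gcd_pos_of_pos_right _ hy
  obtain ⟨k, hk⟩ := Nat.gcd_dvd_right x y
  obtain ⟨l, hl⟩ := Nat.gcd_dvd_left x y
  set g := Nat.gcd x y with hg
  by_contra hcon
  push_neg at hcon
  have hkpos : 0 < k := by
    rcases Nat.eq_zero_or_pos k with rfl | hp
    · omega
    · exact hp
  have hk4 : k < 4 := by
    have h4 : g * k < g * 4 := by rw [Nat.mul_comm g 4]; omega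
    exact Nat.lt_of_mul_lt_mul_left h4
  have hk6 : k ∣ 6 := by interval_cases k <;> norm_num
  obtain ⟨t, ht⟩ := hk6
  exact h ⟨t * l, by rw [hk, hl, show (6:ℕ) = k * t from ht]; ring⟩

theorem lcm_lower_bound_d3 (q d₁ d₂ d₃ m : ℕ) (hq : IsPrimePow q)
    (h3 : 0 < d₃) (h32 : d₃ ≤ d₂) (h21 : d₂ ≤ d₁)
    (hnd2 : ¬ d₂ ∣ 6 * d₁) (hnd31 : ¬ d₃ ∣ 6 * d₁) (hnd32 : ¬ d₃ ∣ 6 * d₂)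
    (hm : 0 < m)
    (hdvd : Nat.lcm (Nat.lcm (q ^ d₁ - 1) (q ^ d₂ - 1)) (q ^ d₃ - 1) ∣ m) :
    (m : ℝ) ≥ (q : ℝ) ^ ((9 / 4 : ℝ) * d₃) := by
  have hq2 : 2 ≤ q := hq.two_le
  set a := q ^ d₁ - 1 with ha
  set b := q ^ d₂ - 1 with hb
  set c := q ^ d₃ - 1 with hc
  set g12 := Nat.gcd d₁ d₂ with hg12
  set g13 := Nat.gcd d₁ d₃ with hg13
  set g23 := Nat.gcd d₂ d₃ with hg23
  -- quarter bounds
  have hq12 : 4 * g12 ≤ d₂ := by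
    exact quarter_bound (show 0 < d₂ by omega) hnd2
  have hq13 : 4 * g13 ≤ d₃ := by
    exact quarter_bound h3 hnd31
  have hq23 : 4 * g23 ≤ d₃ := by
    exact quarter_bound h3 hnd32
  have hg12pos : 0 < g12 := Nat.gcd_pos_of_pos_right _ (by omega)
  have hg13pos : 0 < g13 := Nat.gcd_pos_of_pos_right _ h3
  have hg23pos : 0 < g23 := Nat.gcd_pos_of_pos_right _ h3
  -- strict inequalities
  have hd21 : d₂ < d₁ := by
    rcases Nat.lt_or_ge d₂ d₁ with h | h
    · exact h
    · exfalso; exact hnd2 ⟨6, by omega⟩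
  have hd32 : d₃ < d₂ := by
    rcases Nat.lt_or_ge d₃ d₂ with h | h
    · exact h
    · exfalso; exact hnd32 ⟨6, by omega⟩
  -- positivity of a b c
  have hapos : 0 < a := by
    have := Nat.one_lt_pow (show d₁ ≠ 0 by omega) (show 1 < q by omega); omega
  have hbpos : 0 < b := by
    have := Nat.one_lt_pow (show d₂ ≠ 0 by omega) (show 1 < q by omega); omega
  have hcpos : 0 < c := by
    have := Nat.one_lt_pow (show d₃ ≠ 0 by omega) (show 1 < q by omega); omega
  have hgab : 0 < Nat.gcd a b := Nat.gcd_pos_of_pos_left _ hapos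
  have hlabpos : 0 < Nat.lcm a b := Nat.lcm_pos hapos hbpos
  -- step 1: lcm a b ≥ q^(d₁-g12) * b
  have step1 : q ^ (d₁ - g12) * b ≤ Nat.lcm a b := by
    have hA : Nat.gcd a b ∣ q ^ g12 - 1 := gcd_pow_sub_one_dvd q d₁ d₂ hq2
    have hAle : Nat.gcd a b ≤ q ^ g12 - 1 :=
      Nat.le_of_dvd (by have := Nat.one_lt_pow (show g12 ≠ 0 by omega) (show 1 < q by omega); omega) hA
    have hC : q ^ (d₁ - g12) * (q ^ g12 - 1) ≤ a :=
      pow_mul_pred_le q d₁ g12 (by omega) (le_trans (Nat.gcd_le_left _ (by omega)) (le_refl d₁))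
    have key : q ^ (d₁ - g12) * Nat.gcd a b * b ≤ Nat.lcm a b * Nat.gcd a b := by
      calc q ^ (d₁ - g12) * Nat.gcd a b * b ≤ q ^ (d₁ - g12) * (q ^ g12 - 1) * b := by
            apply Nat.mul_le_mul_right; apply Nat.mul_le_mul_left; exact hAle
        _ ≤ a * b := Nat.mul_le_mul_right _ hC
        _ = Nat.gcd a b * Nat.lcm a b := (Nat.gcd_mul_lcm a b).symm
        _ = Nat.lcm a b * Nat.gcd a b := Nat.mul_comm _ _
    have := Nat.le_of_mul_le_mul_right (by
      calc q ^ (d₁ - g12) * b * Nat.gcd a b = q ^ (d₁ - g12) * Nat.gcd a b * b := by ring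
        _ ≤ Nat.lcm a b * Nat.gcd a b := key) hgab
    exact this
  -- step 2: L ≥ q^(d₁-g12) * b * q^(d₃ - g13 - g23)
  set L := Nat.lcm (Nat.lcm a b) c with hL
  set G := Nat.gcd (Nat.lcm a b) c with hG
  have hGpos : 0 < G := Nat.gcd_pos_of_pos_left _ hlabpos
  have hGdvd : G ∣ (q ^ g13 - 1) * (q ^ g23 - 1) := by
    have h1 : G ∣ Nat.gcd a c * Nat.gcd b c :=
      gcd_lcm_dvd_mul_gcd a b c hapos.ne' hbpos.ne' hcpos.ne'
    exact h1.trans (mul_dvd_mul (gcd_pow_sub_one_dvd q d₁ d₃ hq2) (gcd_pow_sub_one_dvd q d₂ d₃ hq2))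
  have hGle : G ≤ (q ^ g13 - 1) * (q ^ g23 - 1) := by
    apply Nat.le_of_dvd _ hGdvd
    have h1 := Nat.one_lt_pow (show g13 ≠ 0 by omega) (show 1 < q by omega)
    have h2 := Nat.one_lt_pow (show g23 ≠ 0 by omega) (show 1 < q by omega)
    exact Nat.mul_pos (by omega) (by omega)
  have hg13le : g13 ≤ d₃ := Nat.gcd_le_right _ h3
  have hcbig : q ^ (d₃ - g13 - g23) * ((q ^ g13 - 1) * (q ^ g23 - 1)) ≤ c := by
    have h1 : q ^ g23 - 1 ≤ q ^ g23 := by omega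
    calc q ^ (d₃ - g13 - g23) * ((q ^ g13 - 1) * (q ^ g23 - 1))
        ≤ q ^ (d₃ - g13 - g23) * ((q ^ g13 - 1) * q ^ g23) :=
          Nat.mul_le_mul_left _ (Nat.mul_le_mul_left _ h1)
      _ = q ^ (d₃ - g13) * (q ^ g13 - 1) := by
          rw [show q ^ (d₃ - g13 - g23) * ((q ^ g13 - 1) * q ^ g23)
              = (q ^ (d₃ - g13 - g23) * q ^ g23) * (q ^ g13 - 1) by ring, ← pow_add]
          congr 2
          omega
      _ ≤ c := pow_mul_pred_le q d₃ g13 (by omega) hg13le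
  have step2 : q ^ (d₁ - g12) * b * q ^ (d₃ - g13 - g23) ≤ L := by
    have key : q ^ (d₁ - g12) * b * q ^ (d₃ - g13 - g23) * G ≤ L * G := by
      calc q ^ (d₁ - g12) * b * q ^ (d₃ - g13 - g23) * G
          ≤ q ^ (d₁ - g12) * b * (q ^ (d₃ - g13 - g23) * ((q ^ g13 - 1) * (q ^ g23 - 1))) := by
            rw [mul_assoc]
            exact Nat.mul_le_mul_left _ (Nat.mul_le_mul_left _ hGle)
        _ ≤ q ^ (d₁ - g12) * b * c := Nat.mul_le_mul_left _ hcbig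
        _ ≤ Nat.lcm a b * c := Nat.mul_le_mul_right _ step1
        _ = L * G := by rw [hL, hG, mul_comm L G, Nat.gcd_mul_lcm]
    exact Nat.le_of_mul_le_mul_right key hGpos
  -- step 3: numeric
  have hbge : q ^ (d₂ - 1) ≤ b := by
    have := pow_mul_pred_le q d₂ 1 (by omega) (by omega)
    simp only [pow_one] at this
    calc q ^ (d₂ - 1) = q ^ (d₂ - 1) * 1 := by ring
      _ ≤ q ^ (d₂ - 1) * (q - 1) := Nat.mul_le_mul_left _ (by omega)
      _ ≤ q ^ d₂ - 1 := this
  set E := (d₁ - g12) + (d₂ - 1) + (d₃ - g13 - g23) with hE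
  have stepE : q ^ E ≤ L := by
    calc q ^ E = q ^ (d₁ - g12) * q ^ (d₂ - 1) * q ^ (d₃ - g13 - g23) := by
          rw [hE, pow_add, pow_add]
      _ ≤ q ^ (d₁ - g12) * b * q ^ (d₃ - g13 - g23) :=
          Nat.mul_le_mul_right _ (Nat.mul_le_mul_left _ hbge)
      _ ≤ L := step2
  have hmL : q ^ E ≤ m := stepE.trans (Nat.le_of_dvd hm hdvd)
  -- final: real inequality
  have hE9 : 9 * d₃ ≤ 4 * E := by
    have h1 : g12 ≤ d₂ := Nat.gcd_le_right _ (by omega)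
    have h2 : g23 ≤ d₃ := Nat.gcd_le_right _ h3
    omega
  have hq1 : (1 : ℝ) ≤ (q : ℝ) := by exact_mod_cast (by omega : 1 ≤ q)
  calc (q : ℝ) ^ ((9 / 4 : ℝ) * d₃) ≤ (q : ℝ) ^ ((E : ℕ) : ℝ) := by
        apply Real.rpow_le_rpow_of_exponent_le hq1
        have : (9 : ℝ) * d₃ ≤ 4 * E := by exact_mod_cast hE9
        linarith
    _ = ((q ^ E : ℕ) : ℝ) := by rw [Real.rpow_natCast]; push_cast; ring
    _ ≤ (m : ℝ) := by exact_mod_cast hmL
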